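/- arXiv:math/0211426 — 3 statements merged into one kernel-verified Lean document; each statement's English description precedes it below -/
import Mathlib

section
/- Let (a_n^+), (a_n^-), (b_n^+), (b_n^-) be sequences of integers (indexed by n ≥ 1), and set a_n = a_n^+ + a_n^-, b_n = b_n^+ + b_n^-, A_n = 1 - Σ_{i=1}^n a_i (with A_0 = 1), B_n = 1 - Σ_{i=1}^n b_i (with B_0 = 1). Define the modified coefficients Ã_n^± = A_n + a_n^± and B̃_n^± = B_n + b_n^±, and define c_n^± by c_n^+ = a_n^+ b_n^+ + a_n^+ B_n + A_n b_n^+ + Σ_{i=1}^n (-1)^{n-i}(a_i^+ b_i^- + a_i^- b_i^+) and c_n^- = a_n^- b_n^- + a_n^- B_n + A_n b_n^- + Σ_{i=1}^n (-1)^{n-i}(a_i^+ b_i^- + a_i^- b_i^+). Let c_n = c_n^+ + c_n^-, C_n = 1 - Σ_{i=1}^n c_i, and C̃_n^± = C_n + c_n^±. Then C̃_n^+ = Ã_n^+ · B̃_n^+ and C̃_n^- = Ã_n^- · B̃_n^- for all n ≥ 1. -/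
/-- Equivalence of the two forms of the Thom–Sebastiani formulae:
the term-by-term formulae for `c_n^±` imply the multiplicative formulae
`C̃_n^± = Ã_n^± · B̃_n^±` for the modified coefficients. -/
theorem stmt_1 (ap am bp bm : ℕ → ℤ) (A B : ℕ → ℤ)
    (hA : ∀ n : ℕ, A n = 1 - ∑ i ∈ Finset.Icc 1 n, (ap i + am i))
    (hB : ∀ n : ℕ, B n = 1 - ∑ i ∈ Finset.Icc 1 n, (bp i + bm i))
    (cp cm : ℕ → ℤ)
    (hcp : ∀ n : ℕ, cp n = ap n * bp n + ap n * B n + A n * bp n +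
      ∑ i ∈ Finset.Icc 1 n, (-1 : ℤ) ^ (n - i) * (ap i * bm i + am i * bp i))
    (hcm : ∀ n : ℕ, cm n = am n * bm n + am n * B n + A n * bm n +
      ∑ i ∈ Finset.Icc 1 n, (-1 : ℤ) ^ (n - i) * (ap i * bm i + am i * bp i))
    (C : ℕ → ℤ)
    (hC : ∀ n : ℕ, C n = 1 - ∑ i ∈ Finset.Icc 1 n, (cp i + cm i)) :
    ∀ n : ℕ, 1 ≤ n →
      C n + cp n = (A n + ap n) * (B n + bp n) ∧
      C n + cm n = (A n + am n) * (B n + bm n) := by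
  have key : ∀ n : ℕ, C n = A n * B n -
      ∑ i ∈ Finset.Icc 1 n, (-1 : ℤ) ^ (n - i) * (ap i * bm i + am i * bp i) := by
    intro n
    induction n with
    | zero => simp [hA, hB, hC]
    | succ n ih =>
      have h1 : (1 : ℕ) ≤ n + 1 := Nat.succ_le_succ (Nat.zero_le n)
      have hflip : ∑ i ∈ Finset.Icc 1 (n+1), (-1 : ℤ) ^ (n+1 - i) * (ap i * bm i + am i * bp i)
          = -(∑ i ∈ Finset.Icc 1 n, (-1 : ℤ) ^ (n - i) * (ap i * bm i + am i * bp i))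
            + (ap (n+1) * bm (n+1) + am (n+1) * bp (n+1)) := by
        rw [Finset.sum_Icc_succ_top h1, Nat.sub_self, pow_zero, one_mul,
          ← Finset.sum_neg_distrib]
        congr 1
        apply Finset.sum_congr rfl
        intro i hi
        have hi' : i ≤ n := (Finset.mem_Icc.mp hi).2
        rw [Nat.succ_sub hi', pow_succ]
        ring
      have hAn : A (n+1) = A n - (ap (n+1) + am (n+1)) := by
        rw [hA, hA, Finset.sum_Icc_succ_top h1]; ring
      have hBn : B (n+1) = B n - (bp (n+1) + bm (n+1)) := by
        rw [hB, hB, Finset.sum_Icc_succ_top h1]; ring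
      have hCn : C (n+1) = C n - (cp (n+1) + cm (n+1)) := by
        rw [hC, hC, Finset.sum_Icc_succ_top h1]; ring
      rw [hCn, ih, hcp (n+1), hcm (n+1), hflip, hAn, hBn]
      ring
  intro n _
  constructor
  · rw [key n, hcp n]; ring
  · rw [key n, hcm n]; ring
end

section
/- Let m be an even positive integer. Define sequences Ã_n^+ and Ã_n^- for n ≥ 1 by: Ã_n^+ = (-1)^q where n = qm + s with 1 ≤ s ≤ m (so Ã_n^+ = 1 for 1 ≤ n ≤ m, = -1 for m+1 ≤ n ≤ 2m, etc.), and Ã_n^- = (-1)^q where n = qm + s with 0 ≤ s ≤ m-1 and n ≥ 1. Then these are the modified zeta function coefficients of f(x) = x^m; in particular Ã_n^+ ≠ 0 and Ã_n^- ≠ 0 for all n ≥ 1. -/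
open Classical

/-- The modified zeta function coefficients of `f(x) = x^m`, `m` even:
`Ã_n^+ = (-1)^((n-1)/m)` and `Ã_n^- = (-1)^(n/m)`; in particular they
are never zero. -/
theorem stmt_3 (m : ℕ) (hm : 0 < m) (hme : Even m)
    (ap am A : ℕ → ℤ)
    (hap : ∀ n : ℕ, ap n = if ∃ k : ℕ, 0 < k ∧ n = k * m then 2 * (-1) ^ (n / m + 1) else 0)
    (ham : ∀ n : ℕ, am n = 0)
    (hA : ∀ n : ℕ, A n = 1 - ∑ i ∈ Finset.Icc 1 n, (ap i + am i)) :
    ∀ n : ℕ, 1 ≤ n →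
      A n + ap n = (-1) ^ ((n - 1) / m) ∧
      A n + am n = (-1) ^ (n / m) ∧
      A n + ap n ≠ 0 ∧ A n + am n ≠ 0 := by
  have key : ∀ n : ℕ, A n = (-1) ^ (n / m) := by
    intro n
    induction n with
    | zero => simp [hA]
    | succ n ih =>
      have hsum : A (n + 1) = A n - (ap (n + 1) + am (n + 1)) := by
        rw [hA, hA, Finset.sum_Icc_succ_top (by omega : 1 ≤ n + 1)]
        ring
      rw [hsum, ham, ih, Nat.succ_div]
      by_cases hd : m ∣ (n + 1)
      · have hap' : ap (n + 1) = 2 * (-1) ^ ((n + 1) / m + 1) := by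
          rw [hap, if_pos]
          exact ⟨(n + 1) / m,
            Nat.div_pos (Nat.le_of_dvd (Nat.succ_pos n) hd) hm,
            (Nat.div_mul_cancel hd).symm⟩
        rw [hap', Nat.succ_div, if_pos hd]
        ring
      · have hap' : ap (n + 1) = 0 := by
          rw [hap, if_neg]
          rintro ⟨k, hk, hk2⟩
          exact hd ⟨k, by rw [hk2, mul_comm]⟩
        rw [hap', if_neg hd]
        ring
  intro n hn
  have hne : ∀ k : ℕ, ((-1 : ℤ)) ^ k ≠ 0 := fun k => pow_ne_zero _ (by norm_num)
  by_cases hd : m ∣ n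
  · obtain ⟨q, rfl⟩ := hd
    rcases q with _ | r
    · simp at hn
    · have hdiv : m * (r + 1) / m = r + 1 := Nat.mul_div_cancel_left _ hm
      have hdiv2 : (m * (r + 1) - 1) / m = r := by
        have h1 : m * (r + 1) - 1 = m * r + (m - 1) := by
          rw [Nat.mul_succ, Nat.add_sub_assoc hm]
        rw [h1, Nat.mul_add_div hm, Nat.div_eq_of_lt (by omega)]
        omega
      have hap' : ap (m * (r + 1)) = 2 * (-1) ^ (r + 1 + 1) := by
        rw [hap, if_pos ⟨r + 1, by omega, (mul_comm m (r + 1))⟩, hdiv]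
      have h1 : A (m * (r + 1)) + ap (m * (r + 1)) = (-1) ^ ((m * (r + 1) - 1) / m) := by
        rw [key, hap', hdiv, hdiv2]
        ring
      have h2 : A (m * (r + 1)) + am (m * (r + 1)) = (-1) ^ (m * (r + 1) / m) := by
        rw [key, ham]; ring
      refine ⟨h1, h2, ?_, ?_⟩
      · rw [h1]; exact hne _
      · rw [h2]; exact hne _
  · have hap' : ap n = 0 := by
      rw [hap, if_neg]
      rintro ⟨k, hk, hk2⟩
      exact hd ⟨k, by rw [hk2, mul_comm]⟩
    have hdd : (n - 1) / m = n / m := by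
      conv_rhs => rw [show n = n - 1 + 1 from by omega]
      rw [Nat.succ_div, if_neg (by rwa [show n - 1 + 1 = n from by omega])]
      omega
    have h1 : A n + ap n = (-1) ^ ((n - 1) / m) := by
      rw [key, hap', hdd]; ring
    have h2 : A n + am n = (-1) ^ (n / m) := by
      rw [key, ham]; ring
    exact ⟨h1, h2, h1 ▸ hne _, h2 ▸ hne _⟩
end

section
/- Let h(t) = a_k t^k + a_{k+1} t^{k+1} + ⋯ be a formal power series over ℝ with a_k ≠ 0, and let i ≥ 1. Then for every α ∈ ℝ, the reparametrized series h(t + α t^{i+1}) has the form a_k t^k + ⋯ + a_{k+i−1} t^{k+i−1} + (a_k · k · α + a_{k+i}) t^{k+i} + (higher order terms); consequently, as α ranges over ℝ, the coefficient of t^{k+i} in h(t + α t^{i+1}) takes every real value. -/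
open Polynomial in



lemma aux1 (α : ℝ) (i n d : ℕ) (hi : 1 ≤ i) (hd : d ≤ i) :
    ((1 + Polynomial.C α * Polynomial.X ^ i : Polynomial ℝ) ^ n).coeff d =
      if d = 0 then 1 else if d = i then n * α else 0 := by
  rw [add_comm, add_pow, Polynomial.finset_sum_coeff]
  have key : ∀ m ∈ Finset.range (n+1),
      ((Polynomial.C α * Polynomial.X ^ i) ^ m * 1 ^ (n - m) *
        ((n.choose m : ℕ) : Polynomial ℝ)).coeff d
        = if i * m = d then α ^ m * (n.choose m : ℝ) else 0 := by
    intro m _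
    rw [mul_pow, ← Polynomial.C_pow, one_pow, mul_one, ← pow_mul, ← Polynomial.C_eq_natCast,
      Polynomial.coeff_mul_C, Polynomial.coeff_C_mul, Polynomial.coeff_X_pow]
    by_cases hc : i * m = d
    · simp [hc]
    · rw [if_neg hc, if_neg (fun he => hc he.symm)]
      simp
  rw [Finset.sum_congr rfl key]
  by_cases hd0 : d = 0
  · subst hd0
    rw [Finset.sum_eq_single 0]
    · simp
    · intro m _ hm; rw [if_neg (Nat.mul_ne_zero (by omega) hm)]
    · simp
  · by_cases hdi : d = i
    · rw [Finset.sum_eq_single 1]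
      · simp [hdi, hd0, Nat.choose_one_right, mul_comm, show i ≠ 0 by omega]
      · intro m _ hm
        have hne : i * m ≠ d := by
          rcases Nat.eq_zero_or_pos m with h' | h'
          · subst h'; simp; omega
          · have h2 : m ≥ 2 := by omega
            have h3 : i * 2 ≤ i * m := Nat.mul_le_mul_left i h2
            omega
        rw [if_neg hne]
      · intro h1
        have hn : n = 0 := by simpa using h1
        subst hn; simp
    · rw [Finset.sum_eq_zero]
      · simp [hd0, hdi]
      · intro m _
        have hne : i * m ≠ d := by
          rcases Nat.eq_zero_or_pos m with h' | h'
          · subst h'; simpa using Ne.symm hd0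
          · have h3 : i * 1 ≤ i * m := Nat.mul_le_mul_left i h'
            omega
        rw [if_neg hne]

lemma auxq (α : ℝ) (i : ℕ) :
    (Polynomial.X + Polynomial.C α * Polynomial.X ^ (i + 1) : Polynomial ℝ) =
      Polynomial.X * (1 + Polynomial.C α * Polynomial.X ^ i) := by ring

lemma aux2 (α : ℝ) (i n m : ℕ) (hm : m < n) :
    ((Polynomial.X + Polynomial.C α * Polynomial.X ^ (i + 1) : Polynomial ℝ) ^ n).coeff m = 0 := by
  rw [auxq, mul_pow, mul_comm, Polynomial.coeff_mul_X_pow', if_neg (by omega)]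

lemma aux3 (α : ℝ) (i n m : ℕ) (hm : n ≤ m) :
    ((Polynomial.X + Polynomial.C α * Polynomial.X ^ (i + 1) : Polynomial ℝ) ^ n).coeff m =
      ((1 + Polynomial.C α * Polynomial.X ^ i : Polynomial ℝ) ^ n).coeff (m - n) := by
  rw [auxq, mul_pow, mul_comm, Polynomial.coeff_mul_X_pow', if_pos hm]

lemma auxcomp (h : Polynomial ℝ) (α : ℝ) (i m : ℕ) :
    (h.comp (Polynomial.X + Polynomial.C α * Polynomial.X ^ (i + 1))).coeff m =
      ∑ n ∈ h.support, h.coeff n *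
        ((Polynomial.X + Polynomial.C α * Polynomial.X ^ (i + 1)) ^ n).coeff m := by
  rw [Polynomial.comp_eq_sum_left, Polynomial.sum_def, Polynomial.finset_sum_coeff]
  simp [Polynomial.coeff_C_mul]

/-- The reparametrization `t ↦ t + α t^(i+1)` applied to a series of order `k`
with leading coefficient `a_k ≠ 0` leaves the coefficients in degrees
`< k + i` unchanged and changes the degree `k + i` coefficient to
`a_k·k·α + a_{k+i}`; as `α` ranges over `ℝ`, this coefficient takes every
real value. -/
theorem stmt_16 (h : Polynomial ℝ) (k i : ℕ) (hk : 1 ≤ k) (hi : 1 ≤ i)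
    (ak : ℝ) (hak : h.coeff k = ak) (h0 : ak ≠ 0)
    (hlow : ∀ j : ℕ, j < k → h.coeff j = 0) :
    (∀ α : ℝ,
      (∀ j : ℕ, j < k →
        (h.comp (Polynomial.X + Polynomial.C α * Polynomial.X ^ (i + 1))).coeff j = 0) ∧
      (∀ j : ℕ, j < i →
        (h.comp (Polynomial.X + Polynomial.C α * Polynomial.X ^ (i + 1))).coeff (k + j) =
          h.coeff (k + j)) ∧
      (h.comp (Polynomial.X + Polynomial.C α * Polynomial.X ^ (i + 1))).coeff (k + i) =
        ak * k * α + h.coeff (k + i)) ∧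
    (∀ v : ℝ, ∃ α : ℝ,
      (h.comp (Polynomial.X + Polynomial.C α * Polynomial.X ^ (i + 1))).coeff (k + i) = v) := by
  have hsupp : ∀ n ∈ h.support, k ≤ n := by
    intro n hn
    by_contra hc
    exact (Polynomial.mem_support_iff.mp hn) (hlow n (by omega))
  have main : ∀ α : ℝ,
      (∀ j : ℕ, j < k →
        (h.comp (Polynomial.X + Polynomial.C α * Polynomial.X ^ (i + 1))).coeff j = 0) ∧
      (∀ j : ℕ, j < i →
        (h.comp (Polynomial.X + Polynomial.C α * Polynomial.X ^ (i + 1))).coeff (k + j) =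
          h.coeff (k + j)) ∧
      (h.comp (Polynomial.X + Polynomial.C α * Polynomial.X ^ (i + 1))).coeff (k + i) =
        ak * k * α + h.coeff (k + i) := by
    intro α
    refine ⟨?_, ?_, ?_⟩
    · intro j hj
      rw [auxcomp]
      refine Finset.sum_eq_zero fun n hn => ?_
      rw [aux2 α i n j (by have := hsupp n hn; omega), mul_zero]
    · intro j hj
      rw [auxcomp, Finset.sum_eq_single (k + j)]
      · rw [aux3 α i (k + j) (k + j) le_rfl, Nat.sub_self,
          aux1 α i (k + j) 0 hi (by omega), if_pos rfl, mul_one]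
      · intro n hn hne
        have hkn := hsupp n hn
        rcases Nat.lt_or_ge (k + j) n with h' | h'
        · rw [aux2 α i n (k + j) h', mul_zero]
        · rw [aux3 α i n (k + j) h',
            aux1 α i n (k + j - n) hi (by omega),
            if_neg (by omega), if_neg (by omega), mul_zero]
      · intro hns
        rw [Polynomial.notMem_support_iff.mp hns, zero_mul]
    · rw [auxcomp]
      have hvan : ∀ n, n ∉ ({k, k + i} : Finset ℕ) →
          h.coeff n * ((Polynomial.X + Polynomial.C α * Polynomial.X ^ (i + 1)) ^ n).coeff (k + i)
            = 0 := by
        intro n hn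
        simp only [Finset.mem_insert, Finset.mem_singleton] at hn
        push_neg at hn
        rcases Nat.lt_or_ge n k with h' | h'
        · rw [hlow n h', zero_mul]
        · rcases Nat.lt_or_ge (k + i) n with h'' | h''
          · rw [aux2 α i n (k + i) h'', mul_zero]
          · rw [aux3 α i n (k + i) h'',
              aux1 α i n (k + i - n) hi (by omega),
              if_neg (by omega), if_neg (by omega), mul_zero]
      have h1 : ∑ n ∈ h.support, h.coeff n *
            ((Polynomial.X + Polynomial.C α * Polynomial.X ^ (i + 1)) ^ n).coeff (k + i)
          = ∑ n ∈ h.support ∪ {k, k + i}, h.coeff n *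
            ((Polynomial.X + Polynomial.C α * Polynomial.X ^ (i + 1)) ^ n).coeff (k + i) := by
        refine Finset.sum_subset Finset.subset_union_left fun n _ hn => ?_
        rw [Polynomial.notMem_support_iff.mp hn, zero_mul]
      have h2 : ∑ n ∈ ({k, k + i} : Finset ℕ), h.coeff n *
            ((Polynomial.X + Polynomial.C α * Polynomial.X ^ (i + 1)) ^ n).coeff (k + i)
          = ∑ n ∈ h.support ∪ {k, k + i}, h.coeff n *
            ((Polynomial.X + Polynomial.C α * Polynomial.X ^ (i + 1)) ^ n).coeff (k + i) := by
        refine Finset.sum_subset Finset.subset_union_right fun n _ hn => hvan n hn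
      rw [h1, ← h2, Finset.sum_pair (by omega : k ≠ k + i)]
      rw [aux3 α i k (k + i) (by omega), aux3 α i (k + i) (k + i) le_rfl,
        Nat.sub_self, Nat.add_sub_cancel_left,
        aux1 α i k i hi le_rfl, aux1 α i (k + i) 0 hi (by omega),
        if_neg (by omega), if_pos rfl, if_pos rfl, hak, mul_one]
      ring
  refine ⟨main, fun v => ?_⟩
  refine ⟨(v - h.coeff (k + i)) / (ak * k), ?_⟩
  rw [(main _).2.2]
  have hk0 : (k : ℝ) ≠ 0 := Nat.cast_ne_zero.mpr (by omega)
  field_simp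
  ring
end
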